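/- Orthogonal Procrustes: for A, B ∈ ℝ^{m×n}, the minimum of ‖B − AO‖_F² over orthogonal O ∈ ℝ^{n×n} equals ‖A‖_F² + ‖B‖_F² − 2‖AᵀB‖_*, attained at Ô = UVᵀ where AᵀB = UΣVᵀ is a singular value decomposition. -/
import Mathlib


open Matrix BigOperators

lemma procrustes_diag_bound (n : ℕ) (W : Matrix (Fin n) (Fin n) ℝ) (σ : Fin n → ℝ)
    (hσ : ∀ i, 0 ≤ σ i) (hW : Wᵀ * W = 1) :
    (W * Matrix.diagonal σ).trace ≤ ∑ i, σ i := by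
  rw [Matrix.trace]
  apply Finset.sum_le_sum
  intro i _
  have h1 : (Wᵀ * W) i i = (1 : Matrix (Fin n) (Fin n) ℝ) i i := by rw [hW]
  rw [Matrix.mul_apply, Matrix.one_apply_eq] at h1
  simp only [Matrix.transpose_apply] at h1
  have h2 : W i i * W i i ≤ ∑ k, W k i * W k i :=
    Finset.single_le_sum (f := fun k => W k i * W k i)
      (fun k _ => mul_self_nonneg _) (Finset.mem_univ i)
  rw [h1] at h2
  have h3 : W i i ≤ 1 := by nlinarith
  simp only [Matrix.diag_apply, Matrix.mul_diagonal]
  nlinarith [hσ i]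

lemma procrustes_expand (m n : ℕ) (A B : Matrix (Fin m) (Fin n) ℝ)
    (O : Matrix (Fin n) (Fin n) ℝ) (hO : Oᵀ * O = 1) :
    ((B - A * O)ᵀ * (B - A * O)).trace =
      (Aᵀ * A).trace + (Bᵀ * B).trace - 2 * (Oᵀ * (Aᵀ * B)).trace := by
  have hO' : O * Oᵀ = 1 := mul_eq_one_comm.mp hO
  have h1 : ((A * O)ᵀ * (A * O)).trace = (Aᵀ * A).trace := by
    rw [Matrix.transpose_mul]
    have e : Oᵀ * Aᵀ * (A * O) = (Oᵀ * (Aᵀ * A)) * O := by simp only [Matrix.mul_assoc]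
    rw [e, Matrix.trace_mul_comm, ← Matrix.mul_assoc, hO', Matrix.one_mul]
  have h2 : (Bᵀ * (A * O)).trace = (Oᵀ * (Aᵀ * B)).trace := by
    rw [← Matrix.trace_transpose (Bᵀ * (A * O))]
    congr 1
    rw [Matrix.transpose_mul, Matrix.transpose_mul, Matrix.transpose_transpose, Matrix.mul_assoc]
  have h3 : ((A * O)ᵀ * B).trace = (Oᵀ * (Aᵀ * B)).trace := by
    rw [Matrix.transpose_mul, Matrix.mul_assoc]
  rw [Matrix.transpose_sub, Matrix.sub_mul, Matrix.mul_sub, Matrix.mul_sub,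
    Matrix.trace_sub, Matrix.trace_sub, Matrix.trace_sub, h1, h2, h3]
  ring

/-- Orthogonal Procrustes: for A, B ∈ ℝ^{m×n}, with AᵀB = UΣVᵀ an SVD,
the minimum of ‖B − AO‖_F² over orthogonal O equals
‖A‖_F² + ‖B‖_F² − 2‖AᵀB‖_*, attained at Ô = UVᵀ. -/
theorem orthogonal_procrustes (m n : ℕ)
    (A B : Matrix (Fin m) (Fin n) ℝ)
    (U V : Matrix (Fin n) (Fin n) ℝ) (σ : Fin n → ℝ)
    (hσ : ∀ i, 0 ≤ σ i)
    (hU : Uᵀ * U = 1) (hV : Vᵀ * V = 1)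
    (hSVD : Aᵀ * B = U * Matrix.diagonal σ * Vᵀ) :
    IsLeast {t : ℝ | ∃ O : Matrix (Fin n) (Fin n) ℝ,
        Oᵀ * O = 1 ∧ t = ((B - A * O)ᵀ * (B - A * O)).trace}
      ((Aᵀ * A).trace + (Bᵀ * B).trace - 2 * ∑ i, σ i) ∧
    ((B - A * (U * Vᵀ))ᵀ * (B - A * (U * Vᵀ))).trace =
      (Aᵀ * A).trace + (Bᵀ * B).trace - 2 * ∑ i, σ i := by
  have hU' : U * Uᵀ = 1 := mul_eq_one_comm.mp hU
  have hV' : V * Vᵀ = 1 := mul_eq_one_comm.mp hV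
  -- equality at O = U Vᵀ
  have hOhat : (U * Vᵀ)ᵀ * (U * Vᵀ) = 1 := by
    rw [Matrix.transpose_mul, Matrix.transpose_transpose]
    calc V * Uᵀ * (U * Vᵀ) = V * (Uᵀ * U) * Vᵀ := by
          rw [Matrix.mul_assoc, Matrix.mul_assoc, Matrix.mul_assoc]
      _ = 1 := by rw [hU, Matrix.mul_one, hV']
  have hval : ((U * Vᵀ)ᵀ * (Aᵀ * B)).trace = ∑ i, σ i := by
    rw [hSVD, Matrix.transpose_mul, Matrix.transpose_transpose]
    have : V * Uᵀ * (U * Matrix.diagonal σ * Vᵀ) = V * Matrix.diagonal σ * Vᵀ := by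
      calc V * Uᵀ * (U * Matrix.diagonal σ * Vᵀ)
          = V * (Uᵀ * U) * (Matrix.diagonal σ * Vᵀ) := by
            rw [Matrix.mul_assoc, Matrix.mul_assoc, Matrix.mul_assoc, Matrix.mul_assoc]
        _ = V * Matrix.diagonal σ * Vᵀ := by rw [hU, Matrix.mul_one, Matrix.mul_assoc]
    rw [this, Matrix.trace_mul_comm, ← Matrix.mul_assoc, hV, Matrix.one_mul,
      Matrix.trace_diagonal]
  have heq : ((B - A * (U * Vᵀ))ᵀ * (B - A * (U * Vᵀ))).trace =
      (Aᵀ * A).trace + (Bᵀ * B).trace - 2 * ∑ i, σ i := by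
    rw [procrustes_expand m n A B _ hOhat, hval]
  refine ⟨⟨⟨U * Vᵀ, hOhat, heq.symm⟩, ?_⟩, heq⟩
  rintro t ⟨O, hO, rfl⟩
  rw [procrustes_expand m n A B O hO]
  have hbound : (Oᵀ * (Aᵀ * B)).trace ≤ ∑ i, σ i := by
    rw [hSVD]
    have hW : (Vᵀ * Oᵀ * U)ᵀ * (Vᵀ * Oᵀ * U) = 1 := by
      have hO' : O * Oᵀ = 1 := mul_eq_one_comm.mp hO
      calc (Vᵀ * Oᵀ * U)ᵀ * (Vᵀ * Oᵀ * U)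
          = Uᵀ * (O * (V * Vᵀ) * Oᵀ) * U := by
            simp [Matrix.transpose_mul, Matrix.mul_assoc]
        _ = 1 := by rw [hV', Matrix.mul_one, hO', Matrix.mul_one, hU]
    have := procrustes_diag_bound n (Vᵀ * Oᵀ * U) σ hσ hW
    calc (Oᵀ * (U * Matrix.diagonal σ * Vᵀ)).trace
        = ((Vᵀ * Oᵀ * U) * Matrix.diagonal σ).trace := by
          rw [Matrix.trace_mul_comm]
          have e : U * Matrix.diagonal σ * Vᵀ * Oᵀ
              = (U * Matrix.diagonal σ) * (Vᵀ * Oᵀ) := by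
            simp only [Matrix.mul_assoc]
          rw [e, Matrix.trace_mul_comm]
          simp only [Matrix.mul_assoc]
      _ ≤ ∑ i, σ i := this
  linarith
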